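/- Assume the data assumptions and constraint qualification of problem (P), the step conditions 8 t_k² L_k² ≤ 1 with (σ_k) nonincreasing, σ_k → 0, Σ_k t_k = ∞ and Σ_k t_k σ_k < ∞, and the Attouch–Czarnecki condition. Let z* ∈ S₁ be arbitrary and define W_k(z*) := E_k(z*) + D_k. Then for the optimistic extragradient iterates: (a) lim_{k→∞} W_k(z*) exists in ℝ; (b) lim_{k→∞} ‖z^{k+1/2} − z^k‖ = 0; (c) the sequences (z^k) and (z^{k+1/2}) are bounded. -/

import Mathlib

noncomputable section

open scoped RealInnerProductSpace
open Filter Topology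

variable {Z : Type*} [NormedAddCommGroup Z] [InnerProductSpace ℝ Z] [CompleteSpace Z]

/-- Effective domain of an extended-real-valued function. -/
def edom {Z : Type*} (g : Z → EReal) : Set Z := {z | g z < ⊤}

/-- `g` is proper, convex and lower semicontinuous. -/
structure ProperConvexLsc (g : Z → EReal) : Prop where
  ne_bot : ∀ z, g z ≠ ⊥
  proper : ∃ z, g z < ⊤
  convex : ∀ x y : Z, ∀ a b : ℝ, 0 ≤ a → 0 ≤ b → a + b = 1 →
    g (a • x + b • y) ≤ (a : EReal) * g x + (b : EReal) * g y
  lsc : LowerSemicontinuous g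

/-- Monotonicity of an operator on a real Hilbert space. -/
def IsMonotoneOp (F : Z → Z) : Prop := ∀ x y : Z, 0 ≤ ⟪F x - F y, x - y⟫

/-- Lipschitz continuity with (real) constant `L`. -/
def IsLipOp (L : ℝ) (F : Z → Z) : Prop := ∀ x y : Z, ‖F x - F y‖ ≤ L * ‖x - y‖

/-- The bifunction `H^{(F,g)}(z,y) = ⟪F y, z - y⟫ + g z - g y`. -/
def Hb (F : Z → Z) (g : Z → EReal) (z y : Z) : EReal :=
  ((⟪F y, z - y⟫ : ℝ) : EReal) + g z - g y

/-- The localized dual gap function `Θ(z | F,g,C)`. -/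
def gapFn (F : Z → Z) (g : Z → EReal) (C : Set Z) (z : Z) : EReal :=
  ⨆ y ∈ C, Hb F g z y

/-- The convex subdifferential of an extended-real-valued function. -/
def subdiff (g : Z → EReal) (x : Z) : Set Z :=
  {ξ : Z | ∀ y : Z, ((⟪ξ, y - x⟫ : ℝ) : EReal) + g x ≤ g y}

/-- The solution set `zer(F + ∂g)`. -/
def zerFg (F : Z → Z) (g : Z → EReal) : Set Z := {z : Z | -F z ∈ subdiff g z}

/-- The normal cone to a set `C` at `z`. -/
def normalCone (C : Set Z) (z : Z) : Set Z :=
  {ξ : Z | z ∈ C ∧ ∀ z' ∈ C, ⟪ξ, z' - z⟫ ≤ 0}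

/-- The solution set `zer(F + ∂g + N_C)`. -/
def zerFgN (F : Z → Z) (g : Z → EReal) (C : Set Z) : Set Z :=
  {z : Z | ∃ ξ ∈ subdiff g z, ∃ p ∈ normalCone C z, F z + ξ + p = 0}

/-- The solution set `S₁` of problem (P): points of `S₂` solving the upper HVI over `S₂`. -/
def solP (F₁ : Z → Z) (g₁ : Z → EReal) (S₂ : Set Z) : Set Z :=
  {zs : Z | zs ∈ S₂ ∧ ∀ u ∈ S₂, 0 ≤ Hb F₁ g₁ u zs}

/-- `(α,ρ)`-weak sharpness of the solution set `S` of `HVI(F,g)`. -/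
def WeakSharp (F : Z → Z) (g : Z → EReal) (S : Set Z) (α ρ : ℝ) : Prop :=
  ∀ zs ∈ S, ∀ z ∈ edom g,
    (((α / ρ) * Metric.infDist z S ^ ρ : ℝ) : EReal) ≤ Hb F g z zs

/-- Support function of a set. -/
def suppFn (p : Z) (C : Set Z) : EReal := ⨆ z ∈ C, ((⟪p, z⟫ : ℝ) : EReal)

/-- The Fitzpatrick-type function `φ^{(F,g)}(z,u)`. -/
def phiFn (F : Z → Z) (g : Z → EReal) (z u : Z) : EReal :=
  ⨆ y ∈ edom g, (Hb F g z y + ((⟪y, u⟫ : ℝ) : EReal))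

/-- `x = prox_{τ G}(u)`, via the variational characterization
`⟪u - x, v - x⟫ ≤ τ (G v - G x)` for all `v`. -/
def IsProx (τ : ℝ) (G : Z → EReal) (u x : Z) : Prop :=
  ∀ v : Z, ((⟪u - x, v - x⟫ : ℝ) : EReal) ≤ (τ : EReal) * (G v - G x)

/-- The Tikhonov-regularized operator `V_k = F₂ + σ_k F₁`. -/
def Vop (F₁ F₂ : Z → Z) (σ : ℕ → ℝ) (k : ℕ) (x : Z) : Z := F₂ x + σ k • F₁ x

/-- The Tikhonov-regularized function `G_k = g₂ + σ_k g₁`. -/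
def Gfun (g₁ g₂ : Z → EReal) (σ : ℕ → ℝ) (k : ℕ) (v : Z) : EReal :=
  g₂ v + ((σ k : ℝ) : EReal) * g₁ v

/-- The Attouch–Czarnecki summability condition. -/
def ACcond (F₂ : Z → Z) (g₂ : Z → EReal) (S₂ : Set Z) (t σ : ℕ → ℝ) : Prop :=
  ∀ p : Z, (∃ zs : Z, p ∈ normalCone S₂ zs) →
    ∃ M : ℝ, ∀ K : ℕ,
      (∑ k ∈ Finset.Icc 1 K,
        ((t k : ℝ) : EReal) * ((⨆ zs ∈ S₂, phiFn F₂ g₂ zs (σ k • p)) - suppFn (σ k • p) S₂))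
        ≤ (M : EReal)

/-- `T_K = ∑_{k=1}^K t_k`. -/
def Tsum (t : ℕ → ℝ) (K : ℕ) : ℝ := ∑ k ∈ Finset.Icc 1 K, t k

/-- The ergodic average `z̄^K` (here `w k` plays the role of `z^{k+1/2}`). -/
def zbar (t : ℕ → ℝ) (w : ℕ → Z) (K : ℕ) : Z :=
  (Tsum t K)⁻¹ • ∑ k ∈ Finset.Icc 1 K, t k • w k

/-- Weights `γ_k = 1/∏_{i=1}^k (1 - t_i σ_i μ)` (so `γ_0 = 1`). -/
def gammaW (t σ : ℕ → ℝ) (μ : ℝ) (k : ℕ) : ℝ :=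
  (∏ i ∈ Finset.Icc 1 k, (1 - t i * σ i * μ))⁻¹

/-- The weighted ergodic average used in the strongly monotone case. -/
def zbarW (t σ : ℕ → ℝ) (μ : ℝ) (w : ℕ → Z) (K : ℕ) : Z :=
  (∑ i ∈ Finset.Icc 1 K, t i * σ i * gammaW t σ μ i)⁻¹ •
    ∑ i ∈ Finset.Icc 1 K, (t i * σ i * gammaW t σ μ i) • w i

/-- Convex tangent cone `T_C(x) = cl(⋃_{λ>0} (C - x)/λ)`. -/
def tangentConeCvx (C : Set Z) (x : Z) : Set Z :=
  closure {v : Z | ∃ lam : ℝ, 0 < lam ∧ ∃ c ∈ C, v = lam⁻¹ • (c - x)}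

/-- Polar cone of a set. -/
def polarCone (K : Set Z) : Set Z := {z : Z | ∀ x ∈ K, ⟪z, x⟫ ≤ 0}

private lemma emul_le {τ : ℝ} (ht : 0 < τ) {c : ℝ} {y : EReal} (h : (c : EReal) ≤ y) :
    ((τ * c : ℝ) : EReal) ≤ (τ : EReal) * y := by
  induction y using EReal.rec with
  | bot => exact absurd (le_bot_iff.mp h) (EReal.coe_ne_bot c)
  | coe a =>
      rw [← EReal.coe_mul]
      exact EReal.coe_le_coe_iff.mpr
        (mul_le_mul_of_nonneg_left (EReal.coe_le_coe_iff.mp h) ht.le)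
  | top =>
      rw [EReal.mul_top_of_pos (by exact_mod_cast ht)]
      exact le_top

omit [CompleteSpace Z] in
private lemma subdiff_ne_top {g : Z → EReal} (hp : ∃ z, g z < ⊤) {x ξ : Z}
    (hξ : ξ ∈ subdiff g x) : g x ≠ ⊤ := by
  intro htop
  obtain ⟨z, hz⟩ := hp
  have h := hξ z
  rw [htop, EReal.coe_add_top] at h
  exact absurd (top_le_iff.mp h) hz.ne

omit [CompleteSpace Z] in
private lemma isProx_ne_top {τ : ℝ} (hτ : 0 < τ) {G : Z → EReal} {u x : Z}
    (h : IsProx τ G u x) : G x ≠ ⊤ := by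
  intro htop
  have h0 := h x
  rw [htop] at h0
  have he : (⊤ : EReal) - ⊤ = ⊥ := by simp
  rw [he, EReal.mul_bot_of_pos (by exact_mod_cast hτ)] at h0
  exact (EReal.coe_ne_bot _) (le_bot_iff.mp h0)

private lemma Gfun_fin {a b : EReal} (h1b : a ≠ ⊥) (h2b : b ≠ ⊥) {σk : ℝ} (hσ : 0 < σk)
    (h : b + (σk : EReal) * a ≠ ⊤) : a ≠ ⊤ ∧ b ≠ ⊤ := by
  have ha : a ≠ ⊤ := by
    intro ht
    apply h
    rw [ht, EReal.mul_top_of_pos (by exact_mod_cast hσ)]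
    exact EReal.add_top_of_ne_bot h2b
  refine ⟨ha, ?_⟩
  intro ht
  apply h
  rw [ht]
  lift a to ℝ using ⟨ha, h1b⟩
  rw [← EReal.coe_mul]
  exact EReal.top_add_of_ne_bot (EReal.coe_ne_bot _)

private lemma Gfun_ne_bot {a b : EReal} (h1b : a ≠ ⊥) (h2b : b ≠ ⊥) {σk : ℝ} (hσ : 0 < σk) :
    b + (σk : EReal) * a ≠ ⊥ := by
  rw [Ne, EReal.add_eq_bot_iff]
  rintro (h | h)
  · exact h2b h
  · induction a using EReal.rec with
    | bot => exact h1b rfl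
    | coe c => rw [← EReal.coe_mul] at h; exact EReal.coe_ne_bot _ h
    | top => rw [EReal.mul_top_of_pos (by exact_mod_cast hσ)] at h
             exact (by simp : (⊤:EReal) ≠ ⊥) h

private theorem shifted_sum (f : ℕ → ℝ) (n : ℕ) :
    ∑ i ∈ Finset.range n, f (i + 1) = ∑ j ∈ Finset.Icc 1 n, f j := by
  have e : Finset.Icc 1 n = Finset.Ico 1 (n + 1) := by rw [Finset.Ico_add_one_right_eq_Icc]
  rw [e, Finset.sum_Ico_eq_sum_range]
  simp [add_comm]

omit [CompleteSpace Z] in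
private lemma Gfun_fin' {g₁ g₂ : Z → EReal} {σ : ℕ → ℝ} {k : ℕ} {x : Z}
    (h1b : g₁ x ≠ ⊥) (h2b : g₂ x ≠ ⊥) (hσ : 0 < σ k)
    (h : Gfun g₁ g₂ σ k x ≠ ⊤) : g₁ x ≠ ⊤ ∧ g₂ x ≠ ⊤ :=
  Gfun_fin (a := g₁ x) (b := g₂ x) h1b h2b hσ (by rw [Gfun] at h; exact h)

omit [CompleteSpace Z] in
private lemma Gfun_ne_bot' {g₁ g₂ : Z → EReal} {σ : ℕ → ℝ} {k : ℕ} {x : Z}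
    (h1b : g₁ x ≠ ⊥) (h2b : g₂ x ≠ ⊥) (hσ : 0 < σ k) :
    Gfun g₁ g₂ σ k x ≠ ⊥ := by
  rw [Gfun]
  exact Gfun_ne_bot (a := g₁ x) (b := g₂ x) h1b h2b hσ
set_option maxHeartbeats 1000000 in
/-- under the Attouch–Czarnecki condition, the energy `W_k(z*) = E_k(z*) + D_k`
converges, successive half-steps vanish, and the iterates are bounded. -/
theorem optimistic_extragradient_opial
    (F₁ F₂ : Z → Z) (LF₁ LF₂ : ℝ) (g₁ g₂ : Z → EReal)
    (hF₁m : IsMonotoneOp F₁) (hF₂m : IsMonotoneOp F₂)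
    (hF₁L : IsLipOp LF₁ F₁) (hF₂L : IsLipOp LF₂ F₂)
    (hg₁ : ProperConvexLsc g₁) (hg₂ : ProperConvexLsc g₂)
    (hdom : (edom g₁ ∩ edom g₂).Nonempty)
    (hS₂ne : (zerFg F₂ g₂).Nonempty)
    (hCQ : solP F₁ g₁ (zerFg F₂ g₂) = zerFgN F₁ g₁ (zerFg F₂ g₂))
    (σ t : ℕ → ℝ) (hσpos : ∀ k, 0 < σ k) (hσdec : Antitone σ) (htpos : ∀ k, 0 < t k)
    (hstep : ∀ k ≥ 1, 8 * t k ^ 2 * (LF₂ + σ k * LF₁) ^ 2 ≤ 1)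
    (hσ0 : Tendsto σ atTop (nhds 0))
    (htdiv : ¬ Summable t)
    (htσ : Summable (fun k => t k * σ k))
    (hAC : ACcond F₂ g₂ (zerFg F₂ g₂) t σ)
    (z w : ℕ → Z) (hinit : w 0 = z 1)
    (hw : ∀ k ≥ 1, IsProx (t k) (Gfun g₁ g₂ σ k)
      (z k - t k • Vop F₁ F₂ σ k (w (k - 1))) (w k))
    (hz : ∀ k ≥ 1, IsProx (t k) (Gfun g₁ g₂ σ k)
      (z k - t k • Vop F₁ F₂ σ k (w k)) (z (k + 1)))
    (D : ℕ → ℝ) (hD1 : D 1 = 0)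
    (hD : ∀ k ≥ 2, D k = t (k - 1) ^ 2 / 2 *
      ‖Vop F₁ F₂ σ (k - 1) (w (k - 2)) - Vop F₁ F₂ σ (k - 1) (w (k - 1))‖ ^ 2)
    (zs : Z) (hzs : zs ∈ solP F₁ g₁ (zerFg F₂ g₂)) :
    (∃ l : ℝ, Tendsto (fun k => 1 / 2 * ‖z k - zs‖ ^ 2 + D k) atTop (nhds l)) ∧
    (Tendsto (fun k => ‖w k - z k‖) atTop (nhds 0)) ∧
    (∃ R : ℝ, ∀ k : ℕ, ‖z k‖ ≤ R ∧ ‖w k‖ ≤ R) := by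
  classical
  obtain ⟨hzsS₂, hzsopt⟩ := hzs
  have hzs' : zs ∈ zerFgN F₁ g₁ (zerFg F₂ g₂) := by rw [← hCQ]; exact ⟨hzsS₂, hzsopt⟩
  obtain ⟨ξ, hξ, p, hp, heq⟩ := hzs'
  have hg1st : g₁ zs ≠ ⊤ := subdiff_ne_top hg₁.proper hξ
  have hg2st : g₂ zs ≠ ⊤ := subdiff_ne_top hg₂.proper hzsS₂
  have hGbot : ∀ (k : ℕ) (x : Z), Gfun g₁ g₂ σ k x ≠ ⊥ :=
    fun k x => Gfun_ne_bot' (hg₁.ne_bot x) (hg₂.ne_bot x) (hσpos k)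
  have hGfin : ∀ (k : ℕ) (u x : Z), IsProx (t k) (Gfun g₁ g₂ σ k) u x →
      g₁ x ≠ ⊤ ∧ g₂ x ≠ ⊤ := fun k u x hx =>
    Gfun_fin' (hg₁.ne_bot x) (hg₂.ne_bot x) (hσpos k)
      (isProx_ne_top (htpos k) hx)
  have hWfin : ∀ k, 1 ≤ k → g₁ (w k) ≠ ⊤ ∧ g₂ (w k) ≠ ⊤ :=
    fun k hk => hGfin k _ _ (hw k hk)
  have hZfin : ∀ k, 1 ≤ k → g₁ (z (k+1)) ≠ ⊤ ∧ g₂ (z (k+1)) ≠ ⊤ :=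
    fun k hk => hGfin k _ _ (hz k hk)
  have hGcoe : ∀ (k : ℕ) (x : Z), g₁ x ≠ ⊤ → g₂ x ≠ ⊤ →
      Gfun g₁ g₂ σ k x = (((g₂ x).toReal + σ k * (g₁ x).toReal : ℝ) : EReal) := by
    intro k x h1 h2
    obtain ⟨a, ha⟩ : ∃ a : ℝ, g₁ x = (a : EReal) :=
      ⟨(g₁ x).toReal, (EReal.coe_toReal h1 (hg₁.ne_bot x)).symm⟩
    obtain ⟨b, hb⟩ : ∃ b : ℝ, g₂ x = (b : EReal) :=
      ⟨(g₂ x).toReal, (EReal.coe_toReal h2 (hg₂.ne_bot x)).symm⟩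
    rw [Gfun, ha, hb]
    norm_cast
  have hproxR : ∀ (k : ℕ) (u x v : Z), IsProx (t k) (Gfun g₁ g₂ σ k) u x →
      g₁ x ≠ ⊤ → g₂ x ≠ ⊤ → g₁ v ≠ ⊤ → g₂ v ≠ ⊤ →
      ⟪u - x, v - x⟫ ≤ t k * (((g₂ v).toReal + σ k * (g₁ v).toReal) -
        ((g₂ x).toReal + σ k * (g₁ x).toReal)) := by
    intro k u x v hx h1 h2 h3 h4
    have h := hx v
    rw [hGcoe k x h1 h2, hGcoe k v h3 h4, ← EReal.coe_sub, ← EReal.coe_mul] at h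
    exact_mod_cast h
  have hDnn : ∀ m, 1 ≤ m → 0 ≤ D m := by
    intro m hm
    by_cases hm1 : m = 1
    · rw [hm1, hD1]
    · rw [hD m (by omega)]
      positivity
  -- prox nonexpansiveness estimate
  have hxd : ∀ k, 1 ≤ k → ‖z k - w (k-1)‖^2 ≤ 2 * D k := by
    intro k hk
    by_cases hk1 : k = 1
    · subst hk1
      simp only [hD1, Nat.sub_self]
      rw [hinit, sub_self]
      simp
    · obtain ⟨j, rfl⟩ : ∃ j, k = j + 2 := ⟨k - 2, by omega⟩
      rw [show j + 2 - 1 = j + 1 from by omega]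
      have hj1 : 1 ≤ j + 1 := by omega
      have hf1 := hWfin (j+1) hj1
      have hf2 := hZfin (j+1) hj1
      have c1 := hproxR (j+1) _ (w (j+1)) (z (j+2)) (hw (j+1) hj1) hf1.1 hf1.2 hf2.1 hf2.2
      have c2 := hproxR (j+1) _ (z (j+2)) (w (j+1)) (hz (j+1) hj1) hf2.1 hf2.2 hf1.1 hf1.2
      set x := w (j+1) with hxdef
      set x' := z (j+2) with hx'def
      set u := z (j+1) - t (j+1) • Vop F₁ F₂ σ (j+1) (w (j+1-1)) with hudef
      set u' := z (j+1) - t (j+1) • Vop F₁ F₂ σ (j+1) (w (j+1)) with hu'def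
      have hadd : ⟪u - x, x' - x⟫ + ⟪u' - x', x - x'⟫ ≤ 0 := by linarith [c1, c2]
      have hiden : ⟪u - x, x' - x⟫ + ⟪u' - x', x - x'⟫
          = ⟪u - u', x' - x⟫ + ‖x' - x‖^2 := by
        have e1 : x - x' = -(x' - x) := by abel
        rw [e1, inner_neg_right]
        have e2 : u - x = ((u - u') + (x' - x)) + (u' - x') := by abel
        rw [e2, inner_add_left, inner_add_left, real_inner_self_eq_norm_sq]
        ring
      have hsq : ‖x' - x‖^2 ≤ ⟪u' - u, x' - x⟫ := by
        have e : ⟪u' - u, x' - x⟫ = - ⟪u - u', x' - x⟫ := by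
          rw [← inner_neg_left]; congr 1; abel
        linarith [hadd, hiden, e]
      have hdiff : u' - u = t (j+1) • (Vop F₁ F₂ σ (j+1) (w (j+1-1)) -
          Vop F₁ F₂ σ (j+1) (w (j+1))) := by
        rw [hudef, hu'def, smul_sub]; abel
      have hcs := real_inner_le_norm (u' - u) (x' - x)
      have hnu : ‖u' - u‖ = t (j+1) * ‖Vop F₁ F₂ σ (j+1) (w (j+1-1)) -
          Vop F₁ F₂ σ (j+1) (w (j+1))‖ := by
        rw [hdiff, norm_smul, Real.norm_eq_abs, abs_of_pos (htpos (j+1))]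
      have hDk := hD (j+2) (by omega)
      rw [show j + 2 - 1 = j + 1 from by omega, show j + 2 - 2 = j from by omega] at hDk
      have hj0 : j + 1 - 1 = j := by omega
      rw [hj0] at hnu
      have hXnn := norm_nonneg (x' - x)
      have hUnn := norm_nonneg (u' - u)
      nlinarith [hsq, hcs, sq_nonneg (‖u' - u‖ - ‖x' - x‖), hDk, hnu,
        sq_nonneg (t (j+1)), norm_nonneg (Vop F₁ F₂ σ (j+1) (w j) - Vop F₁ F₂ σ (j+1) (w (j+1)))]
  -- epsilon sequence
  obtain ⟨ε, hεk⟩ : ∃ ε : ℕ → ℝ, ∀ k, ε k = max (t k *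
      (⟪Vop F₁ F₂ σ k (w k), zs - w k⟫ +
        (((g₂ zs).toReal + σ k * (g₁ zs).toReal) -
          ((g₂ (w k)).toReal + σ k * (g₁ (w k)).toReal)))) 0 := ⟨_, fun _ => rfl⟩
  have hεnn : ∀ k, 0 ≤ ε k := fun k => by rw [hεk]; exact le_max_right _ _
  -- the one-step energy inequality
  obtain ⟨W, hWk⟩ : ∃ W : ℕ → ℝ, ∀ k, W k = 1 / 2 * ‖z k - zs‖ ^ 2 + D k := ⟨_, fun _ => rfl⟩
  have key : ∀ k, 1 ≤ k → W (k+1) + 1/4 * ‖w k - z k‖^2 ≤ W k + ε k := by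
    intro k hk
    have hf1 := hWfin k hk
    have hf2 := hZfin k hk
    have i1 := hproxR k _ (w k) (z (k+1)) (hw k hk) hf1.1 hf1.2 hf2.1 hf2.2
    have i2 := hproxR k _ (z (k+1)) zs (hz k hk) hf2.1 hf2.2 hg1st hg2st
    have e1 : z k - t k • Vop F₁ F₂ σ k (w (k-1)) - w k
        = (z k - w k) - t k • Vop F₁ F₂ σ k (w (k-1)) := by abel
    rw [e1, inner_sub_left, real_inner_smul_left] at i1
    have e2 : z k - t k • Vop F₁ F₂ σ k (w k) - z (k+1)
        = (z k - z (k+1)) - t k • Vop F₁ F₂ σ k (w k) := by abel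
    rw [e2, inner_sub_left, real_inner_smul_left] at i2
    have id1 := norm_sub_sq_real (z k - z (k+1)) (zs - z (k+1))
    rw [show (z k - z (k+1)) - (zs - z (k+1)) = z k - zs from by abel] at id1
    have id2 := norm_sub_sq_real (z k - w k) (z (k+1) - w k)
    rw [show (z k - w k) - (z (k+1) - w k) = z k - z (k+1) from by abel] at id2
    have f3 : ⟪Vop F₁ F₂ σ k (w k), zs - z (k+1)⟫
        = ⟪Vop F₁ F₂ σ k (w k), zs - w k⟫ + ⟪Vop F₁ F₂ σ k (w k), w k - z (k+1)⟫ := by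
      rw [← inner_add_right]; congr 1; abel
    have f4 : ⟪Vop F₁ F₂ σ k (w (k-1)), z (k+1) - w k⟫
        = - ⟪Vop F₁ F₂ σ k (w (k-1)), w k - z (k+1)⟫ := by
      rw [← inner_neg_right]; congr 1; abel
    have f5 : ⟪Vop F₁ F₂ σ k (w k), w k - z (k+1)⟫ -
        ⟪Vop F₁ F₂ σ k (w (k-1)), w k - z (k+1)⟫
        ≤ ‖Vop F₁ F₂ σ k (w k) - Vop F₁ F₂ σ k (w (k-1))‖ * ‖w k - z (k+1)‖ := by
      rw [← inner_sub_left]; exact real_inner_le_norm _ _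
    have f5' := mul_le_mul_of_nonneg_left f5 (htpos k).le
    have amgm : t k * (‖Vop F₁ F₂ σ k (w k) - Vop F₁ F₂ σ k (w (k-1))‖ * ‖w k - z (k+1)‖)
        ≤ t k ^ 2 / 2 * ‖Vop F₁ F₂ σ k (w k) - Vop F₁ F₂ σ k (w (k-1))‖^2
          + 1/2 * ‖w k - z (k+1)‖^2 := by
      nlinarith [sq_nonneg (t k * ‖Vop F₁ F₂ σ k (w k) - Vop F₁ F₂ σ k (w (k-1))‖
        - ‖w k - z (k+1)‖)]
    have lip : ‖Vop F₁ F₂ σ k (w k) - Vop F₁ F₂ σ k (w (k-1))‖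
        ≤ (LF₂ + σ k * LF₁) * ‖w k - w (k-1)‖ := by
      have e : Vop F₁ F₂ σ k (w k) - Vop F₁ F₂ σ k (w (k-1))
          = (F₂ (w k) - F₂ (w (k-1))) + σ k • (F₁ (w k) - F₁ (w (k-1))) := by
        simp only [Vop, smul_sub]; abel
      rw [e]
      refine (norm_add_le _ _).trans ?_
      rw [norm_smul, Real.norm_eq_abs, abs_of_pos (hσpos k)]
      have h1 := hF₂L (w k) (w (k-1))
      have h2 := hF₁L (w k) (w (k-1))
      nlinarith [mul_le_mul_of_nonneg_left h2 (hσpos k).le]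
    have hX2 : ‖Vop F₁ F₂ σ k (w k) - Vop F₁ F₂ σ k (w (k-1))‖^2
        ≤ (LF₂ + σ k * LF₁)^2 * ‖w k - w (k-1)‖^2 := by
      nlinarith [lip, norm_nonneg (Vop F₁ F₂ σ k (w k) - Vop F₁ F₂ σ k (w (k-1))),
        mul_self_le_mul_self (norm_nonneg (Vop F₁ F₂ σ k (w k) - Vop F₁ F₂ σ k (w (k-1)))) lip]
    have htri : ‖w k - w (k-1)‖ ≤ ‖w k - z k‖ + ‖z k - w (k-1)‖ := by
      rw [show w k - w (k-1) = (w k - z k) + (z k - w (k-1)) from by abel]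
      exact norm_add_le _ _
    have hY : ‖w k - w (k-1)‖^2 ≤ 2*‖w k - z k‖^2 + 4 * D k := by
      nlinarith [htri, hxd k hk, norm_nonneg (w k - z k), norm_nonneg (z k - w (k-1)),
        norm_nonneg (w k - w (k-1)), sq_nonneg (‖w k - z k‖ - ‖z k - w (k-1)‖)]
    have hD0 := hDnn k hk
    have hmain : t k^2 * ‖Vop F₁ F₂ σ k (w k) - Vop F₁ F₂ σ k (w (k-1))‖^2
        ≤ 1/4 * ‖w k - z k‖^2 + 1/2 * D k := by
      have hstep' := hstep k hk
      have m1 := mul_le_mul_of_nonneg_left hX2 (sq_nonneg (t k))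
      have m2 := mul_le_mul_of_nonneg_left hY
        (mul_nonneg (sq_nonneg (t k)) (sq_nonneg (LF₂ + σ k * LF₁)))
      have h2S4D : (0:ℝ) ≤ 2*‖w k - z k‖^2 + 4 * D k := by positivity
      have m3 := mul_le_mul_of_nonneg_right hstep' h2S4D
      nlinarith [m1, m2, m3]
    have hDval := hD (k+1) (by omega)
    rw [show k + 1 - 1 = k from by omega, show k + 1 - 2 = k - 1 from by omega] at hDval
    have er1 : ‖zs - z (k+1)‖ = ‖z (k+1) - zs‖ := norm_sub_rev _ _
    have er2 : ‖w k - z (k+1)‖ = ‖z (k+1) - w k‖ := norm_sub_rev _ _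
    have er3 : ‖w k - z k‖ = ‖z k - w k‖ := norm_sub_rev _ _
    have er4 : ‖Vop F₁ F₂ σ k (w (k-1)) - Vop F₁ F₂ σ k (w k)‖
        = ‖Vop F₁ F₂ σ k (w k) - Vop F₁ F₂ σ k (w (k-1))‖ := norm_sub_rev _ _
    have f11 : t k * (⟪Vop F₁ F₂ σ k (w k), zs - w k⟫ +
        (((g₂ zs).toReal + σ k * (g₁ zs).toReal) -
          ((g₂ (w k)).toReal + σ k * (g₁ (w k)).toReal))) ≤ ε k := by
      rw [hεk]; exact le_max_left _ _
    have f3t : t k * ⟪Vop F₁ F₂ σ k (w k), zs - z (k+1)⟫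
        = t k * ⟪Vop F₁ F₂ σ k (w k), zs - w k⟫
          + t k * ⟪Vop F₁ F₂ σ k (w k), w k - z (k+1)⟫ := by rw [f3]; ring
    have f4t : t k * ⟪Vop F₁ F₂ σ k (w (k-1)), z (k+1) - w k⟫
        = - (t k * ⟪Vop F₁ F₂ σ k (w (k-1)), w k - z (k+1)⟫) := by rw [f4]; ring
    rw [er1] at id1
    rw [er2] at f5' amgm
    rw [← er3] at id2
    rw [hWk (k+1), hWk k, hDval, er4]
    linarith [i1, i2, id1, id2, f3t, f4t, f5', amgm, f11, hmain, hD0]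
  -- normal cone and support function facts
  have hpneg : F₁ zs + ξ = -p := eq_neg_of_add_eq_zero_left heq
  have hH1 : ∀ b : Z, g₁ b ≠ ⊤ →
      ⟪F₁ b, zs - b⟫ + (g₁ zs).toReal - (g₁ b).toReal ≤ ⟪p, b - zs⟫ := by
    intro b hb
    have hmono := hF₁m zs b
    rw [inner_sub_left] at hmono
    have hsub := hξ b
    rw [← EReal.coe_toReal hg1st (hg₁.ne_bot zs), ← EReal.coe_toReal hb (hg₁.ne_bot b),
      ← EReal.coe_add] at hsub
    have hsubR : ⟪ξ, b - zs⟫ + (g₁ zs).toReal ≤ (g₁ b).toReal := by exact_mod_cast hsub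
    have e1 : ⟪F₁ zs, zs - b⟫ + ⟪ξ, zs - b⟫ = ⟪p, b - zs⟫ := by
      rw [← inner_add_left, hpneg, inner_neg_left, ← inner_neg_right, neg_sub]
    have e2 : ⟪ξ, b - zs⟫ = - ⟪ξ, zs - b⟫ := by rw [← inner_neg_right, neg_sub]
    linarith
  have hsupp : ∀ k : ℕ, suppFn (σ k • p) (zerFg F₂ g₂) = ((⟪σ k • p, zs⟫ : ℝ) : EReal) := by
    intro k
    refine le_antisymm (iSup₂_le fun z' hz' => ?_) ?_
    · have h1 := hp.2 z' hz'
      rw [inner_sub_right] at h1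
      have h2 : ⟪σ k • p, z'⟫ ≤ ⟪σ k • p, zs⟫ := by
        rw [real_inner_smul_left, real_inner_smul_left]
        have := mul_le_mul_of_nonneg_left (by linarith : ⟪p, z'⟫ ≤ ⟪p, zs⟫) (hσpos k).le
        linarith
      exact_mod_cast h2
    · exact le_iSup₂ (f := fun z (_ : z ∈ zerFg F₂ g₂) => ((⟪σ k • p, z⟫ : ℝ) : EReal)) zs hzsS₂
  have hphi : ∀ (k : ℕ) (b : Z), g₂ b ≠ ⊤ →
      ((⟪F₂ b, zs - b⟫ + (g₂ zs).toReal - (g₂ b).toReal + ⟪b, σ k • p⟫ : ℝ) : EReal)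
        ≤ phiFn F₂ g₂ zs (σ k • p) := by
    intro k b hb
    refine le_iSup₂_of_le b (lt_top_iff_ne_top.mpr hb) ?_
    have hHb : Hb F₂ g₂ zs b = ((⟪F₂ b, zs - b⟫ + (g₂ zs).toReal - (g₂ b).toReal : ℝ) : EReal) := by
      obtain ⟨a, ha⟩ : ∃ a : ℝ, g₂ zs = (a : EReal) :=
        ⟨(g₂ zs).toReal, (EReal.coe_toReal hg2st (hg₂.ne_bot zs)).symm⟩
      obtain ⟨c, hc⟩ : ∃ c : ℝ, g₂ b = (c : EReal) :=
        ⟨(g₂ b).toReal, (EReal.coe_toReal hb (hg₂.ne_bot b)).symm⟩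
      rw [Hb, ha, hc]
      norm_cast
    rw [hHb, ← EReal.coe_add]
  have hsupk : ∀ k : ℕ, phiFn F₂ g₂ zs (σ k • p)
      ≤ ⨆ zz ∈ zerFg F₂ g₂, phiFn F₂ g₂ zz (σ k • p) :=
    fun k => le_iSup₂ (f := fun zz (_ : zz ∈ zerFg F₂ g₂) => phiFn F₂ g₂ zz (σ k • p)) zs hzsS₂
  have hεE : ∀ k, 1 ≤ k → ((ε k : ℝ) : EReal) ≤ ((t k : ℝ) : EReal) *
      ((⨆ zz ∈ zerFg F₂ g₂, phiFn F₂ g₂ zz (σ k • p)) - suppFn (σ k • p) (zerFg F₂ g₂)) := by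
    intro k hk
    have hf1 := hWfin k hk
    -- real comparison
    have hbody : ⟪Vop F₁ F₂ σ k (w k), zs - w k⟫ +
        (((g₂ zs).toReal + σ k * (g₁ zs).toReal) -
          ((g₂ (w k)).toReal + σ k * (g₁ (w k)).toReal))
        ≤ (⟪F₂ (w k), zs - w k⟫ + (g₂ zs).toReal - (g₂ (w k)).toReal + ⟪w k, σ k • p⟫)
          - ⟪σ k • p, zs⟫ := by
      have hV : ⟪Vop F₁ F₂ σ k (w k), zs - w k⟫
          = ⟪F₂ (w k), zs - w k⟫ + σ k * ⟪F₁ (w k), zs - w k⟫ := by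
        rw [Vop, inner_add_left, real_inner_smul_left]
      have hH1b := hH1 (w k) hf1.1
      have es1 : ⟪w k, σ k • p⟫ = σ k * ⟪p, w k⟫ := by
        rw [real_inner_comm, real_inner_smul_left]
      have es2 : ⟪σ k • p, zs⟫ = σ k * ⟪p, zs⟫ := real_inner_smul_left _ _ _
      have es3 : ⟪p, w k - zs⟫ = ⟪p, w k⟫ - ⟪p, zs⟫ := inner_sub_right _ _ _
      have hmul := mul_le_mul_of_nonneg_left hH1b (hσpos k).le
      rw [es3] at hmul
      rw [hV, es1, es2]
      nlinarith [hmul]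
    have hrA : (((⟪F₂ (w k), zs - w k⟫ + (g₂ zs).toReal - (g₂ (w k)).toReal + ⟪w k, σ k • p⟫)
          - ⟪σ k • p, zs⟫ : ℝ) : EReal)
        ≤ (⨆ zz ∈ zerFg F₂ g₂, phiFn F₂ g₂ zz (σ k • p)) - suppFn (σ k • p) (zerFg F₂ g₂) := by
      rw [hsupp k, EReal.coe_sub]
      exact EReal.sub_le_sub ((hphi k (w k) hf1.2).trans (hsupk k)) le_rfl
    have hA0 : (0 : EReal)
        ≤ (⨆ zz ∈ zerFg F₂ g₂, phiFn F₂ g₂ zz (σ k • p)) - suppFn (σ k • p) (zerFg F₂ g₂) := by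
      rw [hsupp k]
      refine le_trans ?_ (EReal.sub_le_sub ((hphi k zs hg2st).trans (hsupk k)) le_rfl)
      rw [← EReal.coe_sub]
      have : (0:ℝ) ≤ (⟪F₂ zs, zs - zs⟫ + (g₂ zs).toReal - (g₂ zs).toReal + ⟪zs, σ k • p⟫)
          - ⟪σ k • p, zs⟫ := by
        rw [sub_self, inner_zero_right, real_inner_comm]
        ring_nf
        try exact le_rfl
      exact_mod_cast this
    have h1 := emul_le (htpos k) hrA
    rcases max_cases (t k *
      (⟪Vop F₁ F₂ σ k (w k), zs - w k⟫ +
        (((g₂ zs).toReal + σ k * (g₁ zs).toReal) -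
          ((g₂ (w k)).toReal + σ k * (g₁ (w k)).toReal)))) (0:ℝ) with hm | hm
    · rw [hεk, hm.1]
      refine le_trans ?_ h1
      exact_mod_cast mul_le_mul_of_nonneg_left hbody (htpos k).le
    · rw [hεk, hm.1, EReal.coe_zero]
      exact mul_nonneg (by exact_mod_cast (htpos k).le) hA0
  -- summability of ε
  obtain ⟨M, hM⟩ := hAC p ⟨zs, hp⟩
  have hsum_part : ∀ K, ∑ j ∈ Finset.Icc 1 K, ε j ≤ M := by
    intro K
    have h1 : ((∑ j ∈ Finset.Icc 1 K, ε j : ℝ) : EReal)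
        = ∑ j ∈ Finset.Icc 1 K, ((ε j : ℝ) : EReal) :=
      map_sum (⟨⟨Real.toEReal, EReal.coe_zero⟩, EReal.coe_add⟩ : ℝ →+ EReal) _ _
    have h2 : (∑ j ∈ Finset.Icc 1 K, ((ε j : ℝ) : EReal))
        ≤ ∑ j ∈ Finset.Icc 1 K, ((t j : ℝ) : EReal) *
          ((⨆ zz ∈ zerFg F₂ g₂, phiFn F₂ g₂ zz (σ j • p)) - suppFn (σ j • p) (zerFg F₂ g₂)) :=
      Finset.sum_le_sum (fun j hj => hεE j (Finset.mem_Icc.mp hj).1)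
    have h3 : ((∑ j ∈ Finset.Icc 1 K, ε j : ℝ) : EReal) ≤ ((M : ℝ) : EReal) :=
      (h1 ▸ h2).trans (hM K)
    exact_mod_cast h3
  have hεsum : Summable ε := by
    apply (summable_nat_add_iff 1).mp
    apply summable_of_sum_range_le (fun n => hεnn _)
    intro n
    rw [shifted_sum]
    exact hsum_part n
  -- tail sums
  obtain ⟨T, hTk⟩ : ∃ T : ℕ → ℝ, ∀ k, T k = ∑' j, ε (j + k) := ⟨_, fun _ => rfl⟩
  have hTsummable : ∀ k, Summable (fun j => ε (j + k)) :=
    fun k => (summable_nat_add_iff k).mpr hεsum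
  have hTnn : ∀ k, 0 ≤ T k := fun k => by
    rw [hTk]; exact tsum_nonneg (fun j => hεnn _)
  have hTrec : ∀ k, T k = ε k + T (k+1) := by
    intro k
    have h := (hTsummable k).tsum_eq_zero_add
    rw [zero_add] at h
    rw [hTk, hTk, h]
    congr 1
    exact tsum_congr (fun j => by rw [show j + 1 + k = j + (k + 1) from by omega])
  have hT0 : Tendsto T atTop (𝓝 0) := by
    have h := tendsto_sum_nat_add ε
    exact h.congr (fun k => (hTk k).symm)
  have hWnn : ∀ k, 1 ≤ k → 0 ≤ W k := by
    intro k hk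
    rw [hWk]
    have := hDnn k hk
    positivity
  obtain ⟨U, hUk⟩ : ∃ U : ℕ → ℝ, ∀ k, U k = W k + T k := ⟨_, fun _ => rfl⟩
  have hUdec : ∀ k, 1 ≤ k → U (k+1) ≤ U k := by
    intro k hk
    have h1 := key k hk
    have h2 := hTrec k
    rw [hUk, hUk]
    nlinarith [sq_nonneg ‖w k - z k‖]
  have hUnn : ∀ k, 1 ≤ k → 0 ≤ U k := by
    intro k hk
    rw [hUk]
    exact add_nonneg (hWnn k hk) (hTnn k)
  have hVant : Antitone (fun k => U (k+1)) :=
    antitone_nat_of_succ_le (fun n => hUdec (n+1) (by omega))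
  have hVbdd : BddBelow (Set.range (fun k => U (k+1))) := by
    refine ⟨0, ?_⟩
    rintro x ⟨n, rfl⟩
    exact hUnn (n+1) (by omega)
  have hVlim := tendsto_atTop_ciInf hVant hVbdd
  have hUlim : Tendsto U atTop (𝓝 (⨅ i, U (i+1))) := (tendsto_add_atTop_iff_nat 1).mp hVlim
  have hWlim : Tendsto W atTop (𝓝 (⨅ i, U (i+1))) := by
    have h := hUlim.sub hT0
    rw [sub_zero] at h
    refine h.congr (fun k => ?_)
    rw [hUk]; ring
  refine ⟨⟨⨅ i, U (i+1), hWlim.congr (fun k => hWk k)⟩, ?_, ?_⟩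
  · -- vanishing of half-steps
    have hWslim : Tendsto (fun k => W (k+1)) atTop (𝓝 (⨅ i, U (i+1))) :=
      (tendsto_add_atTop_iff_nat 1).mpr hWlim
    have hε0 : Tendsto ε atTop (𝓝 0) := hεsum.tendsto_atTop_zero
    have hrhs : Tendsto (fun k => 4 * (W k - W (k+1) + ε k)) atTop (𝓝 0) := by
      have h := ((hWlim.sub hWslim).add hε0).const_mul 4
      simpa using h
    have hS0 : Tendsto (fun k => ‖w k - z k‖^2) atTop (𝓝 0) := by
      refine squeeze_zero' (Eventually.of_forall (fun k => sq_nonneg _)) ?_ hrhs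
      filter_upwards [eventually_ge_atTop 1] with k hk
      have := key k hk
      linarith
    have h := (Real.continuous_sqrt.tendsto 0).comp hS0
    rw [Real.sqrt_zero] at h
    exact h.congr (fun k => Real.sqrt_sq (norm_nonneg _))
  · -- boundedness
    obtain ⟨Cs, hCs⟩ : ∃ Cs : ℝ, Cs = ∑' j, ε j := ⟨_, rfl⟩
    have hεleC : ∀ k, ε k ≤ Cs := fun k => by
      rw [hCs]; exact hεsum.le_tsum k (fun j _ => hεnn j)
    have hCnn : 0 ≤ Cs := by rw [hCs]; exact tsum_nonneg hεnn
    have hU1nn : 0 ≤ U 1 := hUnn 1 le_rfl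
    have hUleU1 : ∀ k, 1 ≤ k → U k ≤ U 1 := by
      intro k hk
      have h := hVant (Nat.zero_le (k-1))
      simpa [Nat.sub_add_cancel hk] using h
    have hWleB : ∀ k, 1 ≤ k → W k ≤ U 1 := by
      intro k hk
      have h1 := hUleU1 k hk
      have h2 := hTnn k
      rw [hUk] at h1
      linarith
    have hz_bd : ∀ k, 1 ≤ k → ‖z k‖ ≤ ‖zs‖ + Real.sqrt (2 * U 1) := by
      intro k hk
      have h1 : 1 / 2 * ‖z k - zs‖ ^ 2 + D k ≤ U 1 := by
        have := hWleB k hk; rwa [hWk] at this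
      have h2 : ‖z k - zs‖^2 ≤ 2 * U 1 := by linarith [hDnn k hk]
      have h3 : ‖z k - zs‖ ≤ Real.sqrt (2 * U 1) :=
        (Real.le_sqrt (norm_nonneg _) (by linarith)).mpr h2
      calc ‖z k‖ = ‖zs + (z k - zs)‖ := by congr 1; abel
      _ ≤ ‖zs‖ + ‖z k - zs‖ := norm_add_le _ _
      _ ≤ _ := by linarith
    have hw_bd : ∀ k, 1 ≤ k → ‖w k - z k‖ ≤ Real.sqrt (4 * (U 1 + Cs)) := by
      intro k hk
      have h1 := key k hk
      have h3 := hWnn (k+1) (by omega)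
      have h4 := hWleB k hk
      have h5 := hεleC k
      have h2 : ‖w k - z k‖^2 ≤ 4 * (U 1 + Cs) := by linarith
      exact (Real.le_sqrt (norm_nonneg _) (by linarith)).mpr h2
    refine ⟨max (max ‖z 0‖ ‖w 0‖) (‖zs‖ + Real.sqrt (2 * U 1) + Real.sqrt (4 * (U 1 + Cs))), ?_⟩
    intro k
    rcases Nat.eq_zero_or_pos k with rfl | hk
    · exact ⟨le_max_of_le_left (le_max_left _ _), le_max_of_le_left (le_max_right _ _)⟩
    · constructor
      · refine le_max_of_le_right ?_
        have h1 := hz_bd k hk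
        have h2 := Real.sqrt_nonneg (4 * (U 1 + Cs))
        linarith
      · refine le_max_of_le_right ?_
        have h1 := hz_bd k hk
        have h2 := hw_bd k hk
        calc ‖w k‖ = ‖(w k - z k) + z k‖ := by congr 1; abel
        _ ≤ ‖w k - z k‖ + ‖z k‖ := norm_add_le _ _
        _ ≤ _ := by linarith

end
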